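/- arXiv:2112.11354 — 2 statements merged into one kernel-verified Lean document; each statement's English description precedes it below -/
import Mathlib

section
/- For k ∈ {2, 3}, the minimum over θ ∈ (0, π] of the ratio h(θ) = ((1/2)(1 − cos(θ)/k)) / ((1/2)(1 − cos θ)) is attained at θ = π, giving minimum value 3/4 when k = 2 and 2/3 when k = 3. -/
theorem stmt_14 (k : ℝ) (hk : k = 2 ∨ k = 3)
    (h : ℝ → ℝ)
    (hh : h = fun θ => ((1/2) * (1 - Real.cos θ / k)) / ((1/2) * (1 - Real.cos θ))) :
    (∀ θ ∈ Set.Ioc (0:ℝ) Real.pi, h Real.pi ≤ h θ) ∧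
    h Real.pi = (if k = 2 then 3/4 else 2/3) := by
  subst hh
  constructor
  · intro θ hθ
    have hc2 : Real.cos θ < 1 := by
      have := Real.cos_lt_cos_of_nonneg_of_le_pi (le_refl 0) hθ.2 hθ.1
      simpa using this
    have hc1 : -1 ≤ Real.cos θ := Real.neg_one_le_cos θ
    simp only [Real.cos_pi]
    set c := Real.cos θ
    have hpos : (0:ℝ) < 1/2 * (1 - c) := by nlinarith
    rcases hk with rfl | rfl <;>
    · rw [div_le_div_iff₀ (by norm_num) hpos]
      nlinarith
  · rcases hk with rfl | rfl <;> simp [Real.cos_pi] <;> norm_num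
end

section
/- Let G = (V, E) be a graph with non-negative edge weights w, and let x : V → S^{k−1} (k ∈ {2,3}) be unit vectors with HP(x) := Σ_{(i,j)∈E} w_{ij}·(θ_{ij}/π) ≥ κ·MaxCut(G), where θ_{ij} is the angle between x_i and x_j. Suppose a randomized rounding cuts each edge (i,j) independently of w with probability f_k(θ_{ij}) = (1/2)(1 − cos(θ_{ij})/k). Then the expected cut value F₀ = Σ_{(i,j)∈E} w_{ij} f_k(θ_{ij}) satisfies F₀ ≥ (3/4)κ·MaxCut(G) when k = 2 and F₀ ≥ (2/3)κ·MaxCut(G) when k = 3. -/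
open scoped RealInnerProductSpace

/-- Pointwise bound: for `θ ∈ [0, π]`, `(3/4)·(θ/π) ≤ (1/2)(1 - cos θ / 2)`. -/
lemma aux_k2 {θ : ℝ} (h0 : 0 ≤ θ) (h1 : θ ≤ Real.pi) :
    (3/4 : ℝ) * (θ / Real.pi) ≤ (1/2) * (1 - Real.cos θ / 2) := by
  have hπ : (0:ℝ) < Real.pi := Real.pi_pos
  rcases le_total θ (Real.pi / 2) with hc | hc
  · have hq : Real.cos θ ≤ 1 - 2 / Real.pi ^ 2 * θ ^ 2 := by
      apply Real.cos_le_one_sub_mul_cos_sq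
      rw [abs_of_nonneg h0]; exact h1
    have hπ2 : (0:ℝ) < Real.pi ^ 2 := by positivity
    have hcc : Real.pi ^ 2 * (2 / Real.pi ^ 2 * θ ^ 2) = 2 * θ ^ 2 := by field_simp
    rw [mul_div_assoc', div_le_iff₀ hπ]
    nlinarith [mul_le_mul_of_nonneg_left hq hπ2.le, sq_nonneg (Real.pi - θ)]
  · -- chord bound: cos θ ≤ 1 - 2θ/π on [π/2, π]
    have hch : Real.cos θ ≤ 1 - 2 / Real.pi * θ := by
      have := Real.one_sub_mul_le_cos (x := Real.pi - θ) (by linarith) (by linarith)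
      rw [Real.cos_pi_sub] at this
      have : Real.cos θ ≤ -(1 - 2 / Real.pi * (Real.pi - θ)) := by linarith
      calc Real.cos θ ≤ -(1 - 2 / Real.pi * (Real.pi - θ)) := this
        _ = 1 - 2 / Real.pi * θ := by field_simp; ring
    have h2 : Real.pi * (2 / Real.pi * θ) = 2 * θ := by field_simp
    rw [mul_div_assoc', div_le_iff₀ hπ]
    nlinarith [mul_le_mul_of_nonneg_left hch hπ.le]

/-- Pointwise bound: for `θ ∈ [0, π]`, `(2/3)·(θ/π) ≤ (1/2)(1 - cos θ / 3)`. -/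
lemma aux_k3 {θ : ℝ} (h0 : 0 ≤ θ) (h1 : θ ≤ Real.pi) :
    (2/3 : ℝ) * (θ / Real.pi) ≤ (1/2) * (1 - Real.cos θ / 3) := by
  have hπ : (0:ℝ) < Real.pi := Real.pi_pos
  have hq : Real.cos θ ≤ 1 - 2 / Real.pi ^ 2 * θ ^ 2 := by
    apply Real.cos_le_one_sub_mul_cos_sq
    rw [abs_of_nonneg h0]; exact h1
  have hπ2 : (0:ℝ) < Real.pi ^ 2 := by positivity
  have hcc : Real.pi ^ 2 * (2 / Real.pi ^ 2 * θ ^ 2) = 2 * θ ^ 2 := by field_simp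
  rw [mul_div_assoc', div_le_iff₀ hπ]
  nlinarith [mul_le_mul_of_nonneg_left hq hπ2.le, sq_nonneg (Real.pi - θ)]

theorem stmt_15 (nV k : ℕ) (hk : k = 2 ∨ k = 3)
    (E : Finset (Fin nV × Fin nV)) (w : Fin nV × Fin nV → ℝ) (hw : ∀ e, 0 ≤ w e)
    (x : Fin nV → EuclideanSpace ℝ (Fin k)) (hx : ∀ i, ‖x i‖ = 1)
    (κ maxcut : ℝ)
    (hmax : maxcut = Finset.univ.sup' ⟨∅, Finset.mem_univ ∅⟩
      (fun S : Finset (Fin nV) =>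
        ∑ e ∈ E, if (e.1 ∈ S) ↔ (e.2 ∈ S) then 0 else w e))
    (hHP : κ * maxcut ≤ ∑ e ∈ E, w e * (Real.arccos ⟪x e.1, x e.2⟫ / Real.pi)) :
    (k = 2 → (3/4) * (κ * maxcut) ≤
      ∑ e ∈ E, w e * ((1/2) * (1 - Real.cos (Real.arccos ⟪x e.1, x e.2⟫) / k))) ∧
    (k = 3 → (2/3) * (κ * maxcut) ≤
      ∑ e ∈ E, w e * ((1/2) * (1 - Real.cos (Real.arccos ⟪x e.1, x e.2⟫) / k))) := by
  have harc : ∀ e : Fin nV × Fin nV, 0 ≤ Real.arccos ⟪x e.1, x e.2⟫ ∧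
      Real.arccos ⟪x e.1, x e.2⟫ ≤ Real.pi := fun e =>
    ⟨Real.arccos_nonneg _, Real.arccos_le_pi _⟩
  have key : ∀ (c : ℝ), 0 ≤ c →
      (∀ e : Fin nV × Fin nV, c * (Real.arccos ⟪x e.1, x e.2⟫ / Real.pi) ≤
        (1/2) * (1 - Real.cos (Real.arccos ⟪x e.1, x e.2⟫) / k)) →
      c * (κ * maxcut) ≤
        ∑ e ∈ E, w e * ((1/2) * (1 - Real.cos (Real.arccos ⟪x e.1, x e.2⟫) / k)) := by
    intro c hc hpt
    calc c * (κ * maxcut) ≤ c * ∑ e ∈ E, w e * (Real.arccos ⟪x e.1, x e.2⟫ / Real.pi) :=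
          mul_le_mul_of_nonneg_left hHP hc
      _ = ∑ e ∈ E, w e * (c * (Real.arccos ⟪x e.1, x e.2⟫ / Real.pi)) := by
          rw [Finset.mul_sum]; congr 1; ext e; ring
      _ ≤ ∑ e ∈ E, w e * ((1/2) * (1 - Real.cos (Real.arccos ⟪x e.1, x e.2⟫) / k)) := by
          apply Finset.sum_le_sum
          intro e _
          exact mul_le_mul_of_nonneg_left (hpt e) (hw e)
  constructor
  · intro hk2
    subst hk2
    apply key (3/4) (by norm_num)
    intro e
    have := aux_k2 (harc e).1 (harc e).2
    norm_num at this ⊢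
    exact this
  · intro hk3
    subst hk3
    apply key (2/3) (by norm_num)
    intro e
    have := aux_k3 (harc e).1 (harc e).2
    norm_num at this ⊢
    exact this
end
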